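/- (Gordon's completeness criterion, Euclidean version.) Let X : ℝⁿ → ℝⁿ be a C¹ vector field. Suppose there exist a C¹ function E : ℝⁿ → ℝ, a proper continuous function f : ℝⁿ → ℝ, and constants α, β ≥ 0 such that for all x ∈ ℝⁿ: (1) |dE_x(X(x))| ≤ α·|E(x)| and (2) |f(x)| ≤ β·|E(x)|. Then X is complete, i.e. every maximal integral curve of X (every maximal solution of γ'(t) = X(γ(t))) is defined on all of ℝ. -/

import Mathlib

open Set Metric Real Filter

section GordonAux

variable {H : Type*} [NormedAddCommGroup H] [NormedSpace ℝ H] [FiniteDimensional ℝ H]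

/-- Uniqueness of integral curves of a `C¹` field on an open preconnected set. -/
lemma gordon_eqOn_of_isOpen {X : H → H} (hX : ContDiff ℝ 1 X) {γ σ : ℝ → H} {O : Set ℝ}
    (hO : IsOpen O) (hOc : IsPreconnected O)
    (hγ : ∀ t ∈ O, HasDerivAt γ (X (γ t)) t)
    (hσ : ∀ t ∈ O, HasDerivAt σ (X (σ t)) t)
    {t₁ : ℝ} (ht₁ : t₁ ∈ O) (heq : γ t₁ = σ t₁) : Set.EqOn γ σ O := by
  set A : Set ℝ := {t ∈ O | γ t = σ t} with hA
  have hAopen : IsOpen A := by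
    rw [isOpen_iff_mem_nhds]
    rintro t ⟨htO, htEq⟩
    obtain ⟨K, U, hU, hlip⟩ := (hX.contDiffAt (x := γ t)).exists_lipschitzOnWith
    have hloc : γ =ᶠ[nhds t] σ := by
      apply ODE_solution_unique_of_eventually (v := fun _ : ℝ => X) (s := fun _ => U)
        (Filter.Eventually.of_forall fun _ => hlip) _ _ htEq
      · filter_upwards [hO.mem_nhds htO,
          (hγ t htO).continuousAt.preimage_mem_nhds hU] with u hu1 hu2
        exact ⟨hγ u hu1, hu2⟩
      · filter_upwards [hO.mem_nhds htO,
          (hσ t htO).continuousAt.preimage_mem_nhds (htEq ▸ hU)] with u hu1 hu2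
        exact ⟨hσ u hu1, hu2⟩
    filter_upwards [hloc.and (hO.mem_nhds htO)] with u hu
    exact ⟨hu.2, hu.1⟩
  have hBopen : IsOpen {t ∈ O | γ t ≠ σ t} := by
    rw [isOpen_iff_mem_nhds]
    rintro t ⟨htO, htNe⟩
    have hcont : ContinuousAt (fun u => (γ u, σ u)) t :=
      ((hγ t htO).continuousAt.prodMk (hσ t htO).continuousAt)
    have : {p : H × H | p.1 ≠ p.2} ∈ nhds (γ t, σ t) :=
      (isOpen_ne_fun continuous_fst continuous_snd).mem_nhds htNe
    filter_upwards [hO.mem_nhds htO, hcont.preimage_mem_nhds this] with u hu1 hu2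
    exact ⟨hu1, hu2⟩
  intro t htO
  by_contra hne
  rcases hOc A {t ∈ O | γ t ≠ σ t} hAopen hBopen
    (fun u hu => by by_cases h : γ u = σ u; exacts [Or.inl ⟨hu, h⟩, Or.inr ⟨hu, h⟩])
    ⟨t₁, ht₁, ht₁, heq⟩ ⟨t, htO, htO, hne⟩ with ⟨u, _, ⟨_, h1⟩, ⟨_, h2⟩⟩
  exact h2 h1

/-- Uniform Picard–Lindelöf existence time on a compact set, for a `C¹` field. -/
lemma gordon_uniform_PL {X : H → H} (hX : ContDiff ℝ 1 X) {Kc : Set H}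
    (hKc : IsCompact Kc) :
    ∃ ε > (0:ℝ), ∀ x₀ ∈ Kc, ∀ T₀ : ℝ, ∃ σ : ℝ → H, σ T₀ = x₀ ∧
      ∀ t ∈ Ioo (T₀ - ε) (T₀ + ε), HasDerivAt σ (X (σ t)) t := by
  obtain ⟨r, hr, hcomp⟩ := hKc.exists_isCompact_cthickening
  set U := Metric.cthickening r Kc with hU
  obtain ⟨C, hC⟩ := hcomp.exists_bound_of_continuousOn hX.continuous.continuousOn
  obtain ⟨Lr, hLr⟩ := hcomp.exists_bound_of_continuousOn
    (hX.continuous_fderiv one_ne_zero).continuousOn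
  set C' : ℝ := max C 0 with hC'
  set L : NNReal := Lr.toNNReal with hL
  set ε : ℝ := r / (C' + 1) with hε
  have hC'0 : 0 ≤ C' := le_max_right _ _
  have hεpos : 0 < ε := div_pos hr (by linarith)
  refine ⟨ε, hεpos, fun x₀ hx₀ T₀ => ?_⟩
  have hball : closedBall x₀ r ⊆ U := closedBall_subset_cthickening hx₀ r
  have hxr : ((r.toNNReal : NNReal) : ℝ) = r := Real.coe_toNNReal _ hr.le
  have hPL : IsPicardLindelof (fun _ => X) (tmin := T₀ - ε) (tmax := T₀ + ε)
      ⟨T₀, by constructor <;> linarith⟩ x₀ r.toNNReal 0 C'.toNNReal L :=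
    { lipschitzOnWith := fun t _ => by
        rw [hxr]
        apply (convex_closedBall x₀ r).lipschitzOnWith_of_nnnorm_hasFDerivWithin_le
          (f' := fderiv ℝ X)
          (fun x hx => ((hX.differentiable one_ne_zero) x).hasFDerivAt.hasFDerivWithinAt)
          (fun x hx => ?_)
        rw [← NNReal.coe_le_coe]
        simp only [coe_nnnorm, hL, Real.coe_toNNReal']
        exact le_max_of_le_left (hLr _ (hball hx))
      continuousOn := fun _ _ => continuousOn_const
      norm_le := fun t _ x hx => by
        rw [hxr] at hx
        rw [Real.coe_toNNReal _ hC'0]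
        exact le_max_of_le_left (hC x (hball hx))
      mul_max_le := by
        simp only [add_sub_cancel_left, sub_sub_cancel, max_self, hε, NNReal.coe_zero,
          sub_zero, hxr, Real.coe_toNNReal _ hC'0]
        calc C' * (r / (C' + 1)) = r * (C' / (C' + 1)) := by ring
        _ ≤ r * 1 := by
            apply mul_le_mul_of_nonneg_left _ hr.le
            rw [div_le_one (by linarith)]; linarith
        _ = r := mul_one r }
  obtain ⟨σ, hσ0, hσ⟩ := hPL.exists_eq_forall_mem_Icc_hasDerivWithinAt₀
  exact ⟨σ, hσ0, fun t ht =>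
    (hσ t (Ioo_subset_Icc_self ht)).hasDerivAt (Icc_mem_nhds ht.1 ht.2)⟩

/-- Forward-extension step for Gordon's criterion: a solution whose domain has a
boundary point `b` to the right of some point of the domain can be extended past `b`. -/
lemma gordon_forward_step
    {X : H → H} (hX : ContDiff ℝ 1 X)
    {E : H → ℝ} (hE : ContDiff ℝ 1 E)
    {f : H → ℝ} (hfproper : ∀ K : Set ℝ, IsCompact K → IsCompact (f ⁻¹' K))
    {α β : ℝ} (hα : 0 ≤ α) (hβ : 0 ≤ β)
    (h1 : ∀ x, |fderiv ℝ E x (X x)| ≤ α * |E x|)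
    (h2 : ∀ x, |f x| ≤ β * |E x|)
    {γ : ℝ → H} {s : Set ℝ} (hs : IsOpen s) (hconn : IsPreconnected s)
    (hsol : ∀ t ∈ s, HasDerivAt γ (X (γ t)) t)
    {b t₀ : ℝ} (hbc : b ∈ closure s) (hbs : b ∉ s) (ht₀ : t₀ ∈ s) (hlt : t₀ < b) :
    ∃ γ' : ℝ → H, ∃ s' : Set ℝ, IsOpen s' ∧ IsPreconnected s' ∧ s ⊆ s' ∧
      (∀ t ∈ s', HasDerivAt γ' (X (γ' t)) t) ∧ Set.EqOn γ γ' s ∧ b ∈ s' := by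
  classical
  have hOrd : s.OrdConnected := isPreconnected_iff_ordConnected.mp hconn
  -- the whole interval `(t₀, b)` is inside `s`
  have hIoo : Ioo t₀ b ⊆ s := by
    intro u hu
    obtain ⟨v, hv, hvd⟩ := Metric.mem_closure_iff.mp hbc (b - u) (by linarith [hu.2])
    have huv : u ≤ v := by
      have := abs_lt.mp (by simpa [Real.dist_eq] using hvd)
      linarith [this.1, this.2]
    exact hOrd.out ht₀ hv ⟨hu.1.le, huv⟩
  -- energy bound via Grönwall
  set M : ℝ := |E (γ t₀)| * Real.exp (α * (b - t₀)) with hMdef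
  have hM : ∀ t ∈ Ico t₀ b, |E (γ t)| ≤ M := by
    intro t ht
    have hts : t ∈ s := by
      rcases eq_or_lt_of_le ht.1 with h | h
      · exact h ▸ ht₀
      · exact hIoo ⟨h, ht.2⟩
    have hsub : Icc t₀ t ⊆ s := fun u hu => hOrd.out ht₀ hts hu
    have hderiv : ∀ u ∈ s,
        HasDerivAt (fun w => E (γ w)) (fderiv ℝ E (γ u) (X (γ u))) u := fun u hu =>
      ((hE.differentiable one_ne_zero) (γ u)).hasFDerivAt.comp_hasDerivAt u (hsol u hu)
    have key := norm_le_gronwallBound_of_norm_deriv_right_le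
      (f := fun w => E (γ w)) (f' := fun w => fderiv ℝ E (γ w) (X (γ w)))
      (δ := |E (γ t₀)|) (K := α) (ε := 0) (a := t₀) (b := t)
      (fun u hu => (hderiv u (hsub hu)).continuousAt.continuousWithinAt)
      (fun u hu => (hderiv u (hsub (Ico_subset_Icc_self hu))).hasDerivWithinAt)
      (by rw [Real.norm_eq_abs])
      (fun u hu => by
        rw [Real.norm_eq_abs, Real.norm_eq_abs, add_zero]
        exact h1 (γ u))
      t ⟨ht.1, le_rfl⟩
    rw [gronwallBound_ε0] at key
    calc |E (γ t)| = ‖E (γ t)‖ := (Real.norm_eq_abs _).symm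
      _ ≤ |E (γ t₀)| * Real.exp (α * (t - t₀)) := key
      _ ≤ M := mul_le_mul_of_nonneg_left
          (exp_le_exp.mpr (mul_le_mul_of_nonneg_left (by linarith [ht.2]) hα)) (abs_nonneg _)
  -- the curve stays in a compact set up to time `b`
  set Kc : Set H := f ⁻¹' Icc (-(β * M)) (β * M) with hKcdef
  have hKcp : IsCompact Kc := hfproper _ isCompact_Icc
  have hγK : ∀ t ∈ Ico t₀ b, γ t ∈ Kc := by
    intro t ht
    have : |f (γ t)| ≤ β * M :=
      (h2 (γ t)).trans (mul_le_mul_of_nonneg_left (hM t ht) hβ)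
    exact mem_preimage.mpr ⟨(abs_le.mp this).1, (abs_le.mp this).2⟩
  -- uniform local existence time
  obtain ⟨ε, hεpos, hPL⟩ := gordon_uniform_PL hX hKcp
  set t₂ : ℝ := max t₀ (b - ε / 2) with ht₂def
  set t₁ : ℝ := (t₂ + b) / 2 with ht₁def
  have ht₂b : t₂ < b := max_lt hlt (by linarith)
  have h12 : t₂ < t₁ := by rw [ht₁def]; linarith
  have ht₁b : t₁ < b := by rw [ht₁def]; linarith
  have ht₂t₀ : t₀ ≤ t₂ := le_max_left _ _
  have ht₂ε : b - ε / 2 ≤ t₂ := le_max_right _ _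
  have ht₁s : t₁ ∈ s := hIoo ⟨lt_of_le_of_lt ht₂t₀ h12, ht₁b⟩
  have ht₁K : γ t₁ ∈ Kc := hγK t₁ ⟨ht₂t₀.trans h12.le, ht₁b⟩
  obtain ⟨σ, hσ0, hσ⟩ := hPL (γ t₁) ht₁K t₁
  have hbmem : b ∈ Ioo (t₁ - ε) (t₁ + ε) := by
    constructor
    · linarith
    · rw [ht₁def] at *; linarith
  -- uniqueness on the overlap
  have hOo : IsOpen (s ∩ Ioo (t₁ - ε) (t₁ + ε)) := hs.inter isOpen_Ioo
  have hOc : IsPreconnected (s ∩ Ioo (t₁ - ε) (t₁ + ε)) :=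
    (hOrd.inter Set.ordConnected_Ioo).isPreconnected
  have ht₁O : t₁ ∈ s ∩ Ioo (t₁ - ε) (t₁ + ε) := ⟨ht₁s, by constructor <;> linarith⟩
  have heqO : Set.EqOn γ σ (s ∩ Ioo (t₁ - ε) (t₁ + ε)) :=
    gordon_eqOn_of_isOpen hX hOo hOc (fun t ht => hsol t ht.1) (fun t ht => hσ t ht.2)
      ht₁O hσ0.symm
  -- glue the two solutions
  refine ⟨fun t => if t ∈ s then γ t else σ t, s ∪ Ioo (t₁ - ε) (t₁ + ε),
    hs.union isOpen_Ioo,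
    hconn.union t₁ ht₁s ht₁O.2 isPreconnected_Ioo,
    subset_union_left, ?_, fun t ht => (if_pos ht).symm, Or.inr hbmem⟩
  rintro t (ht | ht)
  · have hev : (fun u => if u ∈ s then γ u else σ u) =ᶠ[nhds t] γ :=
      eventually_of_mem (hs.mem_nhds ht) fun u hu => if_pos hu
    have hder := (hsol t ht).congr_of_eventuallyEq hev
    simpa only [if_pos ht] using hder
  · have hev : (fun u => if u ∈ s then γ u else σ u) =ᶠ[nhds t] σ := by
      refine eventually_of_mem (isOpen_Ioo.mem_nhds ht) fun u hu => ?_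
      by_cases hus : u ∈ s
      · simpa only [if_pos hus] using heqO ⟨hus, hu⟩
      · simp only [if_neg hus]
    have hder := (hσ t ht).congr_of_eventuallyEq hev
    by_cases hts : t ∈ s
    · simpa only [if_pos hts, heqO ⟨hts, ht⟩] using hder
    · simpa only [if_neg hts] using hder

end GordonAux

/-- **Gordon's completeness criterion** (Euclidean version). If a `C¹` vector field
`X : ℝⁿ → ℝⁿ` admits a `C¹` function `E`, a proper continuous function `f` and constants
`α, β ≥ 0` with `|dE_x (X x)| ≤ α |E x|` and `|f x| ≤ β |E x|` for all `x`, then `X` is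
complete: every maximal integral curve of `X` is defined on all of `ℝ`. -/
theorem gordon_completeness
    (n : ℕ) (X : EuclideanSpace ℝ (Fin n) → EuclideanSpace ℝ (Fin n))
    (hX : ContDiff ℝ 1 X)
    (E : EuclideanSpace ℝ (Fin n) → ℝ) (hE : ContDiff ℝ 1 E)
    (f : EuclideanSpace ℝ (Fin n) → ℝ) (hf : Continuous f)
    (hfproper : ∀ K : Set ℝ, IsCompact K → IsCompact (f ⁻¹' K))
    (α β : ℝ) (hα : 0 ≤ α) (hβ : 0 ≤ β)
    (h1 : ∀ x, |fderiv ℝ E x (X x)| ≤ α * |E x|)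
    (h2 : ∀ x, |f x| ≤ β * |E x|) :
    -- every maximal solution of `γ' t = X (γ t)`, defined on an open interval,
    -- is in fact defined on all of `ℝ`
    ∀ (γ : ℝ → EuclideanSpace ℝ (Fin n)) (s : Set ℝ),
      IsOpen s → IsPreconnected s →
      (∀ t ∈ s, HasDerivAt γ (X (γ t)) t) →
      -- maximality: any solution extending `γ` has the same domain
      (∀ (γ' : ℝ → EuclideanSpace ℝ (Fin n)) (s' : Set ℝ),
        IsOpen s' → IsPreconnected s' → s ⊆ s' →
        (∀ t ∈ s', HasDerivAt γ' (X (γ' t)) t) → Set.EqOn γ γ' s → s' = s) →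
      s = Set.univ := by
  intro γ s hs hconn hsol hmax
  -- the empty domain is impossible by local existence
  rcases s.eq_empty_or_nonempty with hemp | ⟨u₀, hu₀⟩
  · exfalso
    obtain ⟨g, hg0, ε, hε, hgsol⟩ :=
      (hX.contDiffAt (x := (0 : EuclideanSpace ℝ (Fin n)))).exists_forall_mem_closedBall_exists_eq_forall_mem_Ioo_hasDerivAt₀ 0
    have := hmax g (Ioo (0 - ε) (0 + ε)) isOpen_Ioo isPreconnected_Ioo
      (hemp ▸ empty_subset _) (fun t ht => hgsol t ht) (hemp ▸ Set.eqOn_empty γ g)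
    rw [hemp] at this
    have h0 : (0 : ℝ) ∈ Ioo (0 - ε) (0 + ε) := by constructor <;> linarith
    rw [this] at h0
    exact h0
  -- otherwise, if `s ≠ univ`, produce an extension and contradict maximality
  by_contra hne
  have hnotclosed : ¬ IsClosed s := by
    intro hcl
    exact hne (((isClopen_iff).mp ⟨hcl, hs⟩).resolve_left (Set.nonempty_iff_ne_empty.mp ⟨u₀, hu₀⟩))
  obtain ⟨b, hbc, hbs⟩ : ∃ b, b ∈ closure s ∧ b ∉ s := by
    by_contra h
    push_neg at h
    exact hnotclosed (by rw [← closure_subset_iff_isClosed]; exact fun x hx => h x hx)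
  have hub : u₀ ≠ b := fun h => hbs (h ▸ hu₀)
  rcases hub.lt_or_gt with hlt | hgt
  · -- forward case
    obtain ⟨γ', s', ho, hc, hss, hsol', heq, hbm⟩ :=
      gordon_forward_step hX hE hfproper hα hβ h1 h2 hs hconn hsol hbc hbs hu₀ hlt
    exact hbs ((hmax γ' s' ho hc hss hsol' heq) ▸ hbm)
  · -- backward case: apply the forward case to the time-reversed field
    set Xn : EuclideanSpace ℝ (Fin n) → EuclideanSpace ℝ (Fin n) := fun x => -X x with hXn
    have hXn1 : ContDiff ℝ 1 Xn := hX.neg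
    have h1n : ∀ x, |fderiv ℝ E x (Xn x)| ≤ α * |E x| := fun x => by
      rw [hXn]; simp only [map_neg, abs_neg]; exact h1 x
    set γn : ℝ → EuclideanSpace ℝ (Fin n) := fun t => γ (-t) with hγn
    set sn : Set ℝ := (fun t : ℝ => -t) ⁻¹' s with hsn
    have hpre_preconn : ∀ u : Set ℝ, IsPreconnected u →
        IsPreconnected ((fun t : ℝ => -t) ⁻¹' u) := by
      intro u hu
      have himg : (fun t : ℝ => -t) ⁻¹' u = (fun t : ℝ => -t) '' u := by
        ext t
        constructor
        · intro h; exact ⟨-t, h, by ring⟩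
        · rintro ⟨w, hw, rfl⟩; simpa using hw
      rw [himg]
      exact hu.image _ continuous_neg.continuousOn
    have hsno : IsOpen sn := hs.preimage continuous_neg
    have hsnc : IsPreconnected sn := hpre_preconn s hconn
    have hsoln : ∀ t ∈ sn, HasDerivAt γn (Xn (γn t)) t := by
      intro t ht
      have hcomp := (hsol (-t) ht).scomp t (hasDerivAt_neg t)
      have : HasDerivAt γn ((-1 : ℝ) • X (γ (-t))) t := hcomp
      simpa [hγn, hXn] using this
    have hpreclos : closure sn = (fun t : ℝ => -t) ⁻¹' closure s := by
      have : sn = (Homeomorph.neg ℝ) ⁻¹' s := rfl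
      rw [this, ← (Homeomorph.neg ℝ).preimage_closure]
      rfl
    have hbcn : -b ∈ closure sn := by
      rw [hpreclos]
      simpa using hbc
    have hbsn : -b ∉ sn := by simpa [hsn] using hbs
    have hu₀n : -u₀ ∈ sn := by simpa [hsn] using hu₀
    have hltn : -u₀ < -b := by linarith
    obtain ⟨γ'', s'', ho, hc, hss, hsol'', heq'', hbm⟩ :=
      gordon_forward_step hXn1 hE hfproper hα hβ h1n h2 hsno hsnc hsoln hbcn hbsn hu₀n hltn
    -- un-reverse time
    set γ3 : ℝ → EuclideanSpace ℝ (Fin n) := fun t => γ'' (-t) with hγ3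
    set s3 : Set ℝ := (fun t : ℝ => -t) ⁻¹' s'' with hs3
    have hs3o : IsOpen s3 := ho.preimage continuous_neg
    have hs3c : IsPreconnected s3 := hpre_preconn s'' hc
    have hs3s : s ⊆ s3 := by
      intro t ht
      exact hss (by simpa [hsn] using ht)
    have hsol3 : ∀ t ∈ s3, HasDerivAt γ3 (X (γ3 t)) t := by
      intro t ht
      have hcomp := (hsol'' (-t) ht).scomp t (hasDerivAt_neg t)
      have : HasDerivAt γ3 ((-1 : ℝ) • Xn (γ'' (-t))) t := hcomp
      simpa [hγ3, hXn] using this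
    have heq3 : Set.EqOn γ γ3 s := by
      intro t ht
      have h1 := heq'' (show -t ∈ sn by simpa [hsn] using ht)
      simpa [hγn, hγ3] using h1
    have hb3 : b ∈ s3 := by simpa [hs3] using hbm
    exact hbs ((hmax γ3 s3 hs3o hs3c hs3s hsol3 heq3) ▸ hb3)
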